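/- arXiv:1601.02161 — 10 statements merged into one kernel-verified Lean document; each statement's English description precedes it below -/
import Mathlib

section
/- For b ∈ (0, 1/2) and v ∈ (−1, 1), setting θ(v) = log( ((1−2b)·v + √(4b² + (1−4b)·v²)) / (2b·(1−v)) ), one has 2b·sinh(θ(v)) / (1 + 2b·(cosh(θ(v)) − 1)) = v; i.e., θ(v) is the inverse of the density map. -/
theorem stmt_3 (b : ℝ) (hb0 : 0 < b) (hb : b < 1/2) (v : ℝ) (hv : v ∈ Set.Ioo (-1 : ℝ) 1) :
    let θ : ℝ := Real.log (((1 - 2*b) * v + Real.sqrt (4*b^2 + (1 - 4*b) * v^2)) / (2*b*(1 - v)))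
    2 * b * Real.sinh θ / (1 + 2 * b * (Real.cosh θ - 1)) = v := by
  intro θ
  obtain ⟨hv1, hv2⟩ := hv
  set s : ℝ := Real.sqrt (4*b^2 + (1 - 4*b) * v^2) with hs
  have h1v2 : (0:ℝ) < 1 - v^2 := by nlinarith
  have hrad : (0:ℝ) < 4*b^2 + (1 - 4*b) * v^2 := by
    nlinarith [sq_nonneg ((1-2*b)*v), mul_pos (mul_pos hb0 hb0) h1v2]
  have hs2 : s^2 = 4*b^2 + (1 - 4*b) * v^2 := Real.sq_sqrt hrad.le
  have hs0 : 0 < s := Real.sqrt_pos.mpr hrad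
  have hfact : s^2 - ((1-2*b)*v)^2 = 4*b^2*(1-v^2) := by rw [hs2]; ring
  have hA : 0 < (1 - 2*b) * v + s := by
    nlinarith [hfact, mul_pos (mul_pos hb0 hb0) h1v2, hs0]
  have hD : 0 < 2*b*(1 - v) := by nlinarith
  have hexp : Real.exp θ = ((1 - 2*b) * v + s) / (2*b*(1 - v)) :=
    Real.exp_log (div_pos hA hD)
  have hexpn : Real.exp (-θ) = (2*b*(1 - v)) / ((1 - 2*b) * v + s) := by
    rw [Real.exp_neg, hexp, inv_div]
  have hden : 0 < 1 + 2 * b * (Real.cosh θ - 1) := by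
    nlinarith [Real.one_le_cosh θ]
  rw [div_eq_iff hden.ne', Real.sinh_eq, Real.cosh_eq, hexp, hexpn]
  field_simp
  nlinarith [hs2, mul_pos hA hD, sq_nonneg (v*s), sq_nonneg s, mul_pos hA hA]
end

section
/- For b ∈ (0, 1/6), the quantity v_max = (1/2)·√((1+2b)(1−6b)/(1−4b)) lies in (0, 1), and G(v_max) = (1−2b)²/(8 − 32b), where G is the hydrodynamic flux with parameter b. -/
theorem stmt_8 (b : ℝ) (hb0 : 0 < b) (hb : b < 1/6) :
    let G : ℝ → ℝ := fun v => -v^2/2 +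
      (4*b^2 + (1 - 2*b)^2 * v^2) /
        (2 * (4*b^2 + (1 - 2*b) * Real.sqrt (4*b^2 + (1 - 4*b) * v^2)))
    let vmax : ℝ := (1/2) * Real.sqrt ((1 + 2*b) * (1 - 6*b) / (1 - 4*b))
    vmax ∈ Set.Ioo (0:ℝ) 1 ∧ G vmax = (1 - 2*b)^2 / (8 - 32*b) := by
  intro G vmax
  have h4b : (0:ℝ) < 1 - 4*b := by nlinarith
  have h6b : (0:ℝ) < 1 - 6*b := by nlinarith
  have h2b : (0:ℝ) < 1 - 2*b := by nlinarith
  have hA : (0:ℝ) < (1 + 2*b) * (1 - 6*b) / (1 - 4*b) := by positivity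
  have hvpos : 0 < vmax := by
    have := Real.sqrt_pos.mpr hA
    simp only [vmax]; positivity
  have hv2 : vmax^2 = (1 + 2*b) * (1 - 6*b) / (4 * (1 - 4*b)) := by
    have := Real.sq_sqrt hA.le
    simp only [vmax]
    rw [mul_pow, this]
    have h14 : (1:ℝ) - 4*b ≠ 0 := ne_of_gt h4b
    field_simp
    try ring
    try exact Or.inl trivial
  have hm : vmax^2 * (4*(1-4*b)) = (1 + 2*b) * (1 - 6*b) := by
    rw [hv2, div_mul_cancel₀ _ (mul_ne_zero four_ne_zero (ne_of_gt h4b))]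
  have hvlt : vmax < 1 := by
    nlinarith [hm, hvpos, sq_nonneg (1 - 2*b)]
  refine ⟨⟨hvpos, hvlt⟩, ?_⟩
  have hinner : 4*b^2 + (1 - 4*b) * vmax^2 = ((1 - 2*b)/2)^2 := by
    rw [hv2]; field_simp; ring
  have hsqrt : Real.sqrt (4*b^2 + (1 - 4*b) * vmax^2) = (1 - 2*b)/2 := by
    rw [hinner, Real.sqrt_sq (by linarith)]
  have hden : 2 * (4*b^2 + (1 - 2*b) * ((1 - 2*b)/2)) ≠ 0 := by nlinarith
  simp only [G, hsqrt]
  have h8 : (8:ℝ) - 32*b ≠ 0 := by nlinarith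
  have h14 : (1:ℝ) - 4*b ≠ 0 := ne_of_gt h4b
  rw [div_add_div _ _ (by norm_num) hden, div_eq_div_iff (mul_ne_zero (by norm_num) hden) h8]
  linear_combination (2 * ((1 - 2*b)^2 - 8*b^2)) * hm
end

section
/- For b ∈ (0, 1/6), the point v₀ = √((1−2b)(1−6b)/(1−4b)) lies in (0, 1) and satisfies G(v₀) = b = G(0); i.e., the horizontal tangent line at 0 intersects the graph of G at ±v₀. -/
theorem stmt_9 (b : ℝ) (hb0 : 0 < b) (hb : b < 1/6) :
    let G : ℝ → ℝ := fun v => -v^2/2 +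
      (4*b^2 + (1 - 2*b)^2 * v^2) /
        (2 * (4*b^2 + (1 - 2*b) * Real.sqrt (4*b^2 + (1 - 4*b) * v^2)))
    let v0 : ℝ := Real.sqrt ((1 - 2*b) * (1 - 6*b) / (1 - 4*b))
    v0 ∈ Set.Ioo (0:ℝ) 1 ∧ G v0 = b ∧ G 0 = b := by
  intro G v0
  have h2b : (0:ℝ) < 1 - 2*b := by linarith
  have h4b : (0:ℝ) < 1 - 4*b := by linarith
  have h6b : (0:ℝ) < 1 - 6*b := by linarith
  have harg : (0:ℝ) < (1 - 2*b) * (1 - 6*b) / (1 - 4*b) := by positivity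
  have hv0sq : v0^2 = (1 - 2*b) * (1 - 6*b) / (1 - 4*b) :=
    Real.sq_sqrt harg.le
  have hv0pos : 0 < v0 := Real.sqrt_pos.mpr harg
  have hv0lt : v0 < 1 := by
    rw [show (1:ℝ) = Real.sqrt 1 by simp [Real.sqrt_one]]
    apply Real.sqrt_lt_sqrt harg.le
    rw [div_lt_one h4b]
    nlinarith
  have hinner : Real.sqrt (4*b^2 + (1 - 4*b) * v0^2) = 1 - 4*b := by
    have : 4*b^2 + (1 - 4*b) * v0^2 = (1 - 4*b)^2 := by
      rw [hv0sq]; field_simp; ring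
    rw [this, Real.sqrt_sq h4b.le]
  have hG0 : G 0 = b := by
    have h0 : Real.sqrt (4*b^2 + (1 - 4*b) * 0^2) = 2*b := by
      rw [show 4*b^2 + (1 - 4*b) * (0:ℝ)^2 = (2*b)^2 by ring,
        Real.sqrt_sq (by linarith)]
    simp only [G, h0]
    have hden : 2 * (4*b^2 + (1 - 2*b) * (2*b)) ≠ 0 := by nlinarith
    field_simp
    ring
  refine ⟨⟨hv0pos, hv0lt⟩, ?_, hG0⟩
  simp only [G, hinner]
  rw [hv0sq]
  have hden : 4*b^2 + (1 - 2*b) * (1 - 4*b) > 0 := by positivity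
  have hden2 : 2 * (4*b^2 + (1 - 2*b) * (1 - 4*b)) ≠ 0 := by positivity
  have hne1 : (1 - 4*b) ≠ 0 := h4b.ne'
  have hne3 : (1 - b*4) ≠ 0 := (by linarith : (0:ℝ) < 1 - b*4).ne'
  have hne4 : b^2*4 + (1 - 2*b) * (1 - b*4) ≠ 0 := (by nlinarith : (0:ℝ) < b^2*4 + (1 - 2*b) * (1 - b*4)).ne'
  have hne2 : 4*b^2 + (1 - 2*b) * (1 - 4*b) ≠ 0 := hden.ne'
  field_simp
  ring
end

section
/- For b ∈ (0, 1/6), G has a strict local minimum at v = 0: G'(0) = 0 and there is δ > 0 such that G(v) > G(0) = b for all 0 < |v| < δ. -/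
theorem stmt_10 (b : ℝ) (hb0 : 0 < b) (hb : b < 1/6) :
    let G : ℝ → ℝ := fun v => -v^2/2 +
      (4*b^2 + (1 - 2*b)^2 * v^2) /
        (2 * (4*b^2 + (1 - 2*b) * Real.sqrt (4*b^2 + (1 - 4*b) * v^2)))
    deriv G 0 = 0 ∧ G 0 = b ∧
    ∃ δ > (0:ℝ), ∀ v : ℝ, 0 < |v| → |v| < δ → G 0 < G v := by
  intro G
  have hc : (0:ℝ) < 1 - 2*b := by linarith
  have h4 : (0:ℝ) < 1 - 4*b := by linarith
  have hb6 : (0:ℝ) < 1 - 6*b := by linarith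
  have hG0 : G 0 = b := by
    show -(0:ℝ)^2/2 + _ = b
    have h1 : 4*b^2 + (1 - 4*b) * (0:ℝ)^2 = (2*b)^2 := by ring
    rw [h1, Real.sqrt_sq (by linarith)]
    field_simp
    ring
  have heven : ∀ v, G (-v) = G v := by
    intro v
    simp only [G, neg_sq]
  have hderiv : deriv G 0 = 0 := by
    have h1 : deriv (fun x => G (-x)) 0 = -deriv G (-0) := deriv_comp_neg G 0
    have h2 : (fun x => G (-x)) = G := funext heven
    rw [h2, neg_zero] at h1
    linarith
  refine ⟨hderiv, hG0, Real.sqrt (b*(1-6*b)), Real.sqrt_pos.mpr (by nlinarith), ?_⟩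
  intro v hv hvlt
  have hv2 : 0 < v^2 := by
    have : v ≠ 0 := by simpa [abs_pos] using hv
    positivity
  have hvd : v^2 < b*(1-6*b) := by
    have h1 : Real.sqrt (v^2) < Real.sqrt (b*(1-6*b)) := by
      rwa [Real.sqrt_sq_eq_abs]
    nlinarith [Real.sq_sqrt (show (0:ℝ) ≤ b*(1-6*b) by nlinarith),
      Real.sqrt_nonneg (b*(1-6*b)), Real.sq_sqrt (sq_nonneg v),
      Real.sqrt_nonneg (v^2)]
  rw [hG0]
  show b < -v^2/2 + (4*b^2 + (1 - 2*b)^2 * v^2) /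
        (2 * (4*b^2 + (1 - 2*b) * Real.sqrt (4*b^2 + (1 - 4*b) * v^2)))
  set s := Real.sqrt (4*b^2 + (1 - 4*b) * v^2) with hsdef
  have hs0 : 0 ≤ s := Real.sqrt_nonneg _
  have hs2 : s^2 = 4*b^2 + (1 - 4*b) * v^2 := Real.sq_sqrt (by nlinarith)
  have hsge : 2*b ≤ s := by nlinarith [hs2, hs0, sq_nonneg (s - 2*b), sq_nonneg (s + 2*b)]
  have hub : 4*b*(s - 2*b) ≤ (1-4*b)*v^2 := by nlinarith [sq_nonneg (s - 2*b)]
  have hD : 0 < 4*b^2 + (1 - 2*b) * s := by nlinarith [mul_nonneg hc.le hs0]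
  have h1 : (1-2*b)*(2*b+v^2)*(4*b*(s-2*b)) ≤ (1-2*b)*(2*b+v^2)*((1-4*b)*v^2) :=
    mul_le_mul_of_nonneg_left hub (by nlinarith)
  have key : (2*b+v^2)*(4*b^2+(1-2*b)*s) < 4*b^2+(1-2*b)^2*v^2 := by
    nlinarith [h1, mul_pos hv2 hv2, mul_lt_mul_of_pos_right hvd hv2,
      mul_pos hb0 hv2, mul_pos (mul_pos hb0 hb0) hv2]
  have h2 : b + v^2/2 < (4*b^2 + (1 - 2*b)^2 * v^2) / (2 * (4*b^2 + (1 - 2*b) * s)) := by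
    rw [lt_div_iff₀ (by linarith)]
    nlinarith [key]
  linarith
end

section
/- If b ∈ (1/6, 1/(2+√2)], then the flux G(v) = −v²/2 + (4b² + (1−2b)²v²)/(2(4b² + (1−2b)√(4b² + (1−4b)v²))) is strictly concave on [−1, 1]. -/
set_option maxHeartbeats 2000000 in
theorem stmt_11 (b : ℝ) (hb1 : 1/6 < b) (hb2 : b ≤ 1 / (2 + Real.sqrt 2)) :
    StrictConcaveOn ℝ (Set.Icc (-1 : ℝ) 1)
      (fun v : ℝ => -v^2/2 +
        (4*b^2 + (1 - 2*b)^2 * v^2) /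
          (2 * (4*b^2 + (1 - 2*b) * Real.sqrt (4*b^2 + (1 - 4*b) * v^2)))) := by
  have h2 : Real.sqrt 2 ^ 2 = 2 := Real.sq_sqrt (by norm_num)
  have h2n : (0:ℝ) ≤ Real.sqrt 2 := Real.sqrt_nonneg 2
  have h2gt : (1:ℝ) < Real.sqrt 2 := by nlinarith
  have hb0 : (0:ℝ) < b := by linarith
  have hpos2 : (0:ℝ) < 2 + Real.sqrt 2 := by linarith
  have hb2' : b * (2 + Real.sqrt 2) ≤ 1 := (le_div_iff₀ hpos2).mp hb2
  have hbhalf : b < 1/2 := by nlinarith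
  have hc : (0:ℝ) < 1 - 2*b := by linarith
  have hsb : Real.sqrt 2 * b ≤ 1 - 2*b := by nlinarith
  have hkey2 : 2*b^2 ≤ (1-2*b)^2 := by
    nlinarith [mul_self_le_mul_self (mul_nonneg h2n hb0.le) hsb]
  -- first derivative
  have hFder : ∀ x : ℝ, 0 < 4*b^2 + (1-4*b)*x^2 →
      HasDerivAt (fun v : ℝ => -v^2/2 +
        (4*b^2 + (1 - 2*b)^2 * v^2) /
          (2 * (4*b^2 + (1 - 2*b) * Real.sqrt (4*b^2 + (1 - 4*b) * v^2))))
        (-x + (1-2*b)*x/(2*Real.sqrt (4*b^2 + (1-4*b)*x^2))) x := by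
    intro x hx
    have hs : 0 < Real.sqrt (4*b^2 + (1-4*b)*x^2) := Real.sqrt_pos.mpr hx
    have hs2 : Real.sqrt (4*b^2 + (1-4*b)*x^2)^2 = 4*b^2 + (1-4*b)*x^2 := Real.sq_sqrt hx.le
    have hDpos : 0 < 2 * (4*b^2 + (1-2*b) * Real.sqrt (4*b^2 + (1-4*b)*x^2)) := by nlinarith
    have hqderiv : HasDerivAt (fun v : ℝ => 4*b^2 + (1-4*b)*v^2) ((1-4*b)*(2*x)) x := by
      have h1 : HasDerivAt (fun v : ℝ => v^2) (2*x) x := by simpa using hasDerivAt_pow 2 x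
      simpa using (h1.const_mul (1-4*b)).const_add (4*b^2)
    have hsder : HasDerivAt (fun v => Real.sqrt (4*b^2 + (1-4*b)*v^2))
        ((1-4*b)*(2*x) / (2 * Real.sqrt (4*b^2 + (1-4*b)*x^2))) x := hqderiv.sqrt (ne_of_gt hx)
    have hN : HasDerivAt (fun v : ℝ => 4*b^2 + (1-2*b)^2 * v^2) ((1-2*b)^2*(2*x)) x := by
      have h1 : HasDerivAt (fun v : ℝ => v^2) (2*x) x := by simpa using hasDerivAt_pow 2 x
      simpa using (h1.const_mul ((1-2*b)^2)).const_add (4*b^2)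
    have hD : HasDerivAt (fun v : ℝ => 2 * (4*b^2 + (1-2*b) * Real.sqrt (4*b^2 + (1-4*b)*v^2)))
        (2 * ((1-2*b) * ((1-4*b)*(2*x) / (2 * Real.sqrt (4*b^2 + (1-4*b)*x^2))))) x :=
      (((hsder.const_mul (1-2*b)).const_add (4*b^2)).const_mul 2)
    have hquad : HasDerivAt (fun v : ℝ => -v^2/2) (-x) x := by
      have h1 : HasDerivAt (fun v : ℝ => v^2) (2*x) x := by simpa using hasDerivAt_pow 2 x
      have := (h1.neg).div_const 2
      simpa [neg_div] using this
    have hdiv := hN.div hD (ne_of_gt hDpos)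
    have hsum := hquad.add hdiv
    set s := Real.sqrt (4*b^2 + (1-4*b)*x^2) with hsdef
    have hsne : s ≠ 0 := ne_of_gt hs
    have h2sne : (2*s) ≠ 0 := mul_ne_zero two_ne_zero hsne
    refine hsum.congr_deriv (Eq.symm ?_)
    congr 1
    have e1 : (4*b^2 + (1-2*b)^2*x^2) * (2*((1-2*b)*((1-4*b)*(2*x)/(2*s))))
        = (4*(1-2*b)*(1-4*b)*x*(4*b^2 + (1-2*b)^2*x^2))/(2*s) := by
      field_simp; ring
    rw [e1]
    have e2 : (1-2*b)^2*(2*x) * (2*(4*b^2 + (1-2*b)*s))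
          - (4*(1-2*b)*(1-4*b)*x*(4*b^2 + (1-2*b)^2*x^2))/(2*s)
        = (4*(1-2*b)*x*((1-2*b)*s+4*b^2)^2)/(2*s) := by
      rw [eq_div_iff h2sne, sub_mul, div_mul_cancel₀ _ h2sne]
      linear_combination (4*(1-2*b)^3*x) * hs2
    rw [e2, div_div, div_eq_div_iff h2sne
      (mul_ne_zero h2sne (ne_of_gt (pow_pos hDpos 2)))]
    ring
  -- second derivative
  have hGder : ∀ x : ℝ, 0 < 4*b^2 + (1-4*b)*x^2 →
      HasDerivAt (fun v : ℝ => -v + (1-2*b)*v/(2*Real.sqrt (4*b^2 + (1-4*b)*v^2)))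
        (-1 + 2*b^2*(1-2*b)/(Real.sqrt (4*b^2 + (1-4*b)*x^2))^3) x := by
    intro x hx
    have hs : 0 < Real.sqrt (4*b^2 + (1-4*b)*x^2) := Real.sqrt_pos.mpr hx
    have hs2 : Real.sqrt (4*b^2 + (1-4*b)*x^2)^2 = 4*b^2 + (1-4*b)*x^2 := Real.sq_sqrt hx.le
    have hqderiv : HasDerivAt (fun v : ℝ => 4*b^2 + (1-4*b)*v^2) ((1-4*b)*(2*x)) x := by
      have h1 : HasDerivAt (fun v : ℝ => v^2) (2*x) x := by simpa using hasDerivAt_pow 2 x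
      simpa using (h1.const_mul (1-4*b)).const_add (4*b^2)
    have hsder : HasDerivAt (fun v => Real.sqrt (4*b^2 + (1-4*b)*v^2))
        ((1-4*b)*(2*x) / (2 * Real.sqrt (4*b^2 + (1-4*b)*x^2))) x := hqderiv.sqrt (ne_of_gt hx)
    have hN : HasDerivAt (fun v : ℝ => (1-2*b)*v) (1-2*b) x := by
      simpa using (hasDerivAt_id x).const_mul (1-2*b)
    have hD : HasDerivAt (fun v : ℝ => 2*Real.sqrt (4*b^2 + (1-4*b)*v^2))
        (2*((1-4*b)*(2*x) / (2 * Real.sqrt (4*b^2 + (1-4*b)*x^2)))) x := hsder.const_mul 2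
    have hdiv := hN.div hD (by positivity : (2*Real.sqrt (4*b^2 + (1-4*b)*x^2)) ≠ 0)
    have hid : HasDerivAt (fun v : ℝ => -v) (-1 : ℝ) x := by
      exact (hasDerivAt_id' x).neg
    have hsum := hid.add hdiv
    set s := Real.sqrt (4*b^2 + (1-4*b)*x^2) with hsdef
    have hsne : s ≠ 0 := ne_of_gt hs
    refine hsum.congr_deriv (Eq.symm ?_)
    congr 1
    have e1 : (1-2*b)*x * (2*((1-4*b)*(2*x)/(2*s)))
        = (2*(1-2*b)*(1-4*b)*x^2)/s := by
      field_simp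
    rw [e1]
    have e2 : (1-2*b)*(2*s) - (2*(1-2*b)*(1-4*b)*x^2)/s = (8*b^2*(1-2*b))/s := by
      rw [eq_div_iff hsne, sub_mul, div_mul_cancel₀ _ hsne]
      linear_combination (2*(1-2*b)) * hs2
    rw [e2, div_div, div_eq_div_iff (by positivity : s^3 ≠ 0)
      (mul_ne_zero hsne (ne_of_gt (by positivity : (0:ℝ) < (2*s)^2)))]
    rw [show s^3 = s^2*s from by ring]
    ring
  apply strictConcaveOn_of_deriv2_neg (convex_Icc _ _)
  · apply Continuous.continuousOn
    apply Continuous.add (by fun_prop)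
    apply Continuous.div (by fun_prop)
    · fun_prop
    · intro x
      have := Real.sqrt_nonneg (4*b^2 + (1-4*b)*x^2)
      nlinarith
  · intro x hx
    rw [interior_Icc] at hx
    have hx2 : x^2 < 1 := by nlinarith [hx.1, hx.2]
    have hqx : 0 < 4*b^2 + (1-4*b)*x^2 := by
      rcases le_or_gt 0 (1-4*b) with h | h
      · nlinarith [mul_nonneg h (sq_nonneg x)]
      · nlinarith
    have hV : IsOpen {v : ℝ | 0 < 4*b^2 + (1-4*b)*v^2} :=
      isOpen_lt continuous_const (by fun_prop)
    have hev : deriv (fun v : ℝ => -v^2/2 +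
        (4*b^2 + (1 - 2*b)^2 * v^2) /
          (2 * (4*b^2 + (1 - 2*b) * Real.sqrt (4*b^2 + (1 - 4*b) * v^2))))
        =ᶠ[nhds x] (fun v : ℝ => -v + (1-2*b)*v/(2*Real.sqrt (4*b^2 + (1-4*b)*v^2))) :=
      Filter.eventuallyEq_of_mem (hV.mem_nhds hqx) (fun y hy => (hFder y hy).deriv)
    have h2d : deriv^[2] (fun v : ℝ => -v^2/2 +
        (4*b^2 + (1 - 2*b)^2 * v^2) /
          (2 * (4*b^2 + (1 - 2*b) * Real.sqrt (4*b^2 + (1 - 4*b) * v^2)))) x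
        = -1 + 2*b^2*(1-2*b)/(Real.sqrt (4*b^2 + (1-4*b)*x^2))^3 := by
      rw [Function.iterate_succ, Function.iterate_one, Function.comp_apply]
      rw [hev.deriv_eq, (hGder x hqx).deriv]
    rw [h2d]
    have hs : 0 < Real.sqrt (4*b^2 + (1-4*b)*x^2) := Real.sqrt_pos.mpr hqx
    set s := Real.sqrt (4*b^2 + (1-4*b)*x^2) with hsdef
    have hkey : 2*b^2*(1-2*b) < s^3 := by
      rcases le_or_gt b (1/4) with hb | hb
      · have hs1 : 2*b ≤ s := by
          have h1 : Real.sqrt ((2*b)^2) ≤ s := Real.sqrt_le_sqrt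
            (by nlinarith [mul_nonneg (by linarith : (0:ℝ) ≤ 1-4*b) (sq_nonneg x)])
          rwa [Real.sqrt_sq (by positivity)] at h1
        have h3 := pow_le_pow_left₀ (by positivity) hs1 3
        nlinarith [mul_pos (mul_pos hb0 hb0) (show (0:ℝ) < 6*b-1 by linarith)]
      · have hq4 : (1-2*b)^2 < 4*b^2 + (1-4*b)*x^2 := by nlinarith
        have hs1 : 1-2*b < s := by
          have h1 := Real.sqrt_lt_sqrt (sq_nonneg (1-2*b)) hq4
          rwa [Real.sqrt_sq hc.le] at h1
        have h3 := pow_lt_pow_left₀ hs1 hc.le (by norm_num : 3 ≠ 0)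
        nlinarith [mul_pos hc (mul_pos hb0 hb0)]
    have h3 : (0:ℝ) < s^3 := by positivity
    have hlt := (div_lt_one h3).mpr hkey
    linarith
end

section
/- If b ∈ (0, 1/6), then G is not concave on [−1, 1] and not convex on [−1, 1]; in particular there exist points at which the second derivative of G is positive and points at which it is negative. -/
lemma argpos (b : ℝ) (hb0 : 0 < b) (hb4 : b < 1/4) (x : ℝ) :
    0 < 4*b^2 + (1-4*b)*x^2 := by
  have h1 : 0 ≤ (1-4*b)*x^2 := mul_nonneg (by linarith) (sq_nonneg x)
  nlinarith

lemma spos (b : ℝ) (hb0 : 0 < b) (hb4 : b < 1/4) (x : ℝ) :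
    0 < Real.sqrt (4*b^2 + (1-4*b)*x^2) :=
  Real.sqrt_pos.2 (argpos b hb0 hb4 x)

lemma ssq (b : ℝ) (hb0 : 0 < b) (hb4 : b < 1/4) (x : ℝ) :
    (Real.sqrt (4*b^2 + (1-4*b)*x^2))^2 = 4*b^2 + (1-4*b)*x^2 :=
  Real.sq_sqrt (argpos b hb0 hb4 x).le

lemma hsderiv (b : ℝ) (hb0 : 0 < b) (hb4 : b < 1/4) (x : ℝ) :
    HasDerivAt (fun v : ℝ => Real.sqrt (4*b^2 + (1-4*b)*v^2))
      ((1-4*b)*x / Real.sqrt (4*b^2 + (1-4*b)*x^2)) x := by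
  have hu : HasDerivAt (fun v : ℝ => 4*b^2 + (1-4*b)*v^2) (2*(1-4*b)*x) x := by
    have := ((hasDerivAt_pow 2 x).const_mul (1-4*b)).const_add (4*b^2)
    refine this.congr_deriv ?_; ring
  have hne : (4*b^2 + (1-4*b)*x^2) ≠ 0 := (argpos b hb0 hb4 x).ne'
  have h := hu.sqrt hne
  refine h.congr_deriv ?_
  have hs := (spos b hb0 hb4 x).ne'
  field_simp

lemma gderiv (b : ℝ) (hb0 : 0 < b) (hb4 : b < 1/4) (x : ℝ) :
    HasDerivAt (fun v : ℝ => -v^2/2 +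
        ((1-2*b) * Real.sqrt (4*b^2 + (1-4*b)*v^2) - 4*b^2)/(2*(1-4*b)))
      (-x + (1-2*b)*x/(2 * Real.sqrt (4*b^2 + (1-4*b)*x^2))) x := by
  have h1 : HasDerivAt (fun v : ℝ => -v^2/2) (-x) x := by
    have := ((hasDerivAt_pow 2 x).neg).div_const 2
    refine this.congr_deriv ?_; ring
  have h2 := (((hsderiv b hb0 hb4 x).const_mul (1-2*b)).sub_const (4*b^2)).div_const (2*(1-4*b))
  have h := h1.add h2
  refine h.congr_deriv ?_
  have hs := (spos b hb0 hb4 x).ne'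
  have hD : (1-4*b) ≠ 0 := by linarith
  have hD4 : (1:ℝ) - b*4 ≠ 0 := by linarith
  field_simp

lemma g2deriv (b : ℝ) (hb0 : 0 < b) (hb4 : b < 1/4) (x : ℝ) :
    HasDerivAt (fun v : ℝ => -v + (1-2*b)*v/(2 * Real.sqrt (4*b^2 + (1-4*b)*v^2)))
      (-1 + 2*b^2*(1-2*b)/(Real.sqrt (4*b^2 + (1-4*b)*x^2))^3) x := by
  have h1 : HasDerivAt (fun v : ℝ => -v) (-1 : ℝ) x := (hasDerivAt_id x).neg
  have hnum : HasDerivAt (fun v : ℝ => (1-2*b)*v) (1-2*b) x := by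
    have := (hasDerivAt_id x).const_mul (1-2*b)
    refine this.congr_deriv ?_; ring
  have hden : HasDerivAt (fun v : ℝ => 2 * Real.sqrt (4*b^2 + (1-4*b)*v^2))
      (2 * ((1-4*b)*x / Real.sqrt (4*b^2 + (1-4*b)*x^2))) x :=
    (hsderiv b hb0 hb4 x).const_mul 2
  have hdne : 2 * Real.sqrt (4*b^2 + (1-4*b)*x^2) ≠ 0 := by
    have := spos b hb0 hb4 x; positivity
  have h := h1.add (hnum.div hden hdne)
  refine h.congr_deriv ?_; congr 1
  have hs := (spos b hb0 hb4 x).ne'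
  have hsq := ssq b hb0 hb4 x
  set S := Real.sqrt (4*b^2 + (1-4*b)*x^2) with hSdef
  field_simp
  linear_combination (1-2*b) * hsq

lemma negpart (b : ℝ) (hb0 : 0 < b) (hb : b < 1/6) :
    -1 + 2*b^2*(1-2*b)/(Real.sqrt (4*b^2 + (1-4*b)*(1/2:ℝ)^2))^3 < 0 := by
  have hb4 : b < 1/4 := by linarith
  have hsq := ssq b hb0 hb4 (1/2)
  have hsp := spos b hb0 hb4 (1/2)
  set S := Real.sqrt (4*b^2 + (1-4*b)*(1/2:ℝ)^2) with hSdef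
  have hS2 : S^2 = 4*b^2 + (1-4*b)/4 := by rw [hsq]; ring
  have hS29 : (1:ℝ)/9 < S^2 := by nlinarith [sq_nonneg (b-1/8)]
  have hS3 : (1:ℝ)/3 < S := by nlinarith [hsp]
  have hS3p : (0:ℝ) < S^3 := by positivity
  have hcube : (1:ℝ)/27 < S^3 := by nlinarith [hS3, hsp]
  have hsmall : 2*b^2*(1-2*b) < 1/27 := by
    nlinarith [mul_pos (mul_pos hb0 hb0) (show (0:ℝ) < 1/6 - b by linarith)]
  have h1 : 2*b^2*(1-2*b)/S^3 < 1 := by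
    rw [div_lt_one hS3p]; linarith
  linarith

theorem stmt_12 (b : ℝ) (hb0 : 0 < b) (hb : b < 1/6) :
    let G : ℝ → ℝ := fun v => -v^2/2 +
      (4*b^2 + (1 - 2*b)^2 * v^2) /
        (2 * (4*b^2 + (1 - 2*b) * Real.sqrt (4*b^2 + (1 - 4*b) * v^2)))
    ¬ ConcaveOn ℝ (Set.Icc (-1 : ℝ) 1) G ∧
    ¬ ConvexOn ℝ (Set.Icc (-1 : ℝ) 1) G ∧
    (∃ x ∈ Set.Ioo (-1 : ℝ) 1, 0 < deriv (deriv G) x) ∧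
    (∃ y ∈ Set.Ioo (-1 : ℝ) 1, deriv (deriv G) y < 0) := by
  intro G
  have hb4 : b < 1/4 := by linarith
  have hD : (0:ℝ) < 1 - 4*b := by linarith
  have hc : (0:ℝ) < 1 - 2*b := by linarith
  have hD4 : (1:ℝ) - b*4 ≠ 0 := by linarith
  -- G equals the simplified g
  have hGg : G = fun v : ℝ => -v^2/2 +
      ((1-2*b) * Real.sqrt (4*b^2 + (1-4*b)*v^2) - 4*b^2)/(2*(1-4*b)) := by
    funext v
    show -v^2/2 + _ = -v^2/2 + _
    congr 1
    have hsq := ssq b hb0 hb4 v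
    have hsp := spos b hb0 hb4 v
    set S := Real.sqrt (4*b^2 + (1-4*b)*v^2) with hSdef
    have hden : (0:ℝ) < 2 * (4*b^2 + (1 - 2*b) * S) := by positivity
    rw [div_eq_div_iff hden.ne' (by positivity)]
    linear_combination (-(2*(1-2*b)^2)) * hsq
  -- values of G
  have hsq1 : Real.sqrt (4*b^2 + (1-4*b)*(1:ℝ)^2) = 1 - 2*b := by
    rw [show 4*b^2 + (1-4*b)*(1:ℝ)^2 = (1-2*b)^2 by ring, Real.sqrt_sq hc.le]
  have hsq0 : Real.sqrt (4*b^2 + (1-4*b)*(0:ℝ)^2) = 2*b := by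
    rw [show 4*b^2 + (1-4*b)*(0:ℝ)^2 = (2*b)^2 by ring, Real.sqrt_sq (by linarith)]
  have hG0 : G 0 = b := by
    rw [hGg]; simp only; rw [hsq0]; field_simp; ring
  have hG1 : G 1 = 0 := by
    rw [hGg]; simp only; rw [hsq1]; field_simp; ring
  have hGeven : ∀ v : ℝ, G (-v) = G v := by
    intro v
    rw [hGg]; simp only [neg_sq]
  -- second derivative formula
  have hd1 : deriv G = fun x : ℝ =>
      -x + (1-2*b)*x/(2 * Real.sqrt (4*b^2 + (1-4*b)*x^2)) := by
    rw [hGg]; funext x; exact (gderiv b hb0 hb4 x).deriv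
  have hd2 : ∀ x : ℝ, deriv (deriv G) x =
      -1 + 2*b^2*(1-2*b)/(Real.sqrt (4*b^2 + (1-4*b)*x^2))^3 := by
    intro x; rw [hd1]; exact (g2deriv b hb0 hb4 x).deriv
  refine ⟨?_, ?_, ?_, ?_⟩
  · -- not concave
    intro hcon
    set T : ℝ := (1-2*b)*(1-6*b)/(2*(1-4*b)) with hTdef
    have hT0 : 0 < T := by
      apply div_pos (by nlinarith) (by linarith)
    set t : ℝ := Real.sqrt T with htdef
    have ht0 : 0 < t := Real.sqrt_pos.2 hT0
    have htsq : t^2 = T := Real.sq_sqrt hT0.le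
    have hT1 : T ≤ 1/2 := by
      rw [hTdef, div_le_iff₀ (by linarith)]; nlinarith
    have ht1 : t ≤ 1 := by nlinarith
    have htmem : t ∈ Set.Icc (-1:ℝ) 1 := ⟨by linarith, ht1⟩
    have htmem' : -t ∈ Set.Icc (-1:ℝ) 1 := ⟨by linarith, by linarith⟩
    have key := hcon.2 htmem htmem' (by norm_num : (0:ℝ) ≤ 1/2)
      (by norm_num : (0:ℝ) ≤ 1/2) (by norm_num)
    simp only [smul_eq_mul] at key
    rw [show (1/2 : ℝ) * t + 1/2 * (-t) = 0 by ring] at key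
    rw [hGeven t] at key
    -- now key : G 0 ≥ 1/2 * G t + 1/2 * G t, i.e. G 0 ≥ G t
    have hGt : b < G t := by
      rw [hGg]; simp only
      have hsq := ssq b hb0 hb4 t
      have hsp := spos b hb0 hb4 t
      set S := Real.sqrt (4*b^2 + (1-4*b)*t^2) with hSdef
      have hS2 : S^2 = 4*b^2 + (1-4*b)*T := by rw [hsq, htsq]
      have hDT : (1-4*b)*T = (1-2*b)*(1-6*b)/2 := by
        rw [hTdef]; field_simp
      have hSc : (1-2*b)/2 < S := by
        have h6 : (0:ℝ) < 1-6*b := by linarith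
        nlinarith [hS2, hDT, hsp, sq_nonneg (1-6*b)]
      have hgt : -t^2/2 + ((1-2*b)*S - 4*b^2)/(2*(1-4*b))
          = b + (1-2*b)*(S - (1-2*b)/2)/(2*(1-4*b)) := by
        rw [htsq, hTdef]; field_simp; ring
      rw [hgt]
      have : 0 < (1-2*b)*(S - (1-2*b)/2)/(2*(1-4*b)) := by
        apply div_pos (mul_pos hc (by linarith)) (by linarith)
      linarith
    rw [hG0] at key
    rw [show (1/2:ℝ) * G t + 1/2 * G t = G t by ring] at key
    exact absurd key (not_le.2 hGt)
  · -- not convex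
    intro hcvx
    have key := hcvx.2 (by norm_num : (-1:ℝ) ∈ Set.Icc (-1:ℝ) 1)
      (by norm_num : (1:ℝ) ∈ Set.Icc (-1:ℝ) 1) (by norm_num : (0:ℝ) ≤ 1/2)
      (by norm_num : (0:ℝ) ≤ 1/2) (by norm_num)
    simp only [smul_eq_mul] at key
    rw [show (1/2 : ℝ) * (-1) + 1/2 * 1 = 0 by ring] at key
    rw [show ((-1:ℝ)) = -(1:ℝ) by norm_num, hGeven 1, hG0, hG1] at key
    linarith
  · -- positive second derivative at 0
    refine ⟨0, by norm_num, ?_⟩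
    rw [hd2 0, hsq0]
    have h8 : (0:ℝ) < 8*b^3 := by positivity
    have : (1:ℝ) < 2*b^2*(1-2*b)/((2*b)^3) := by
      rw [lt_div_iff₀ (by positivity)]; nlinarith
    linarith
  · -- negative second derivative at 1/2
    refine ⟨1/2, by norm_num, ?_⟩
    rw [hd2 (1/2)]
    exact negpart b hb0 hb
end

section
/- For b ∈ (0, 1/6), one has the strict chain of inequalities 0 < v_infl < v_max < v₀ < 1, where v_infl = √(((2b²(1−2b))^{2/3} − 4b²)/(1−4b)), v_max = (1/2)√((1+2b)(1−6b)/(1−4b)) and v₀ = √((1−2b)(1−6b)/(1−4b)). -/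
theorem stmt_15 (b : ℝ) (hb0 : 0 < b) (hb : b < 1/6) :
    let vi : ℝ := Real.sqrt (((2*b^2*(1 - 2*b)) ^ ((2:ℝ)/3) - 4*b^2) / (1 - 4*b))
    let vmax : ℝ := (1/2) * Real.sqrt ((1 + 2*b) * (1 - 6*b) / (1 - 4*b))
    let v0 : ℝ := Real.sqrt ((1 - 2*b) * (1 - 6*b) / (1 - 4*b))
    0 < vi ∧ vi < vmax ∧ vmax < v0 ∧ v0 < 1 := by
  intro vi vmax v0
  have hc : (0:ℝ) < 1 - 4*b := by linarith
  have hx : (0:ℝ) < 2*b^2*(1 - 2*b) := by nlinarith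
  set y : ℝ := (2*b^2*(1 - 2*b)) ^ ((2:ℝ)/3) with hy
  have hy0 : 0 < y := Real.rpow_pos_of_pos hx _
  have hy3 : y^3 = (2*b^2*(1 - 2*b))^2 := by
    rw [hy, ← Real.rpow_natCast ((2*b^2*(1 - 2*b)) ^ ((2:ℝ)/3)) 3,
      ← Real.rpow_mul hx.le]
    norm_num
  -- lower bound: 4b² < y
  have hlb : 4*b^2 < y := by
    by_contra h
    push_neg at h
    have h3 : y^3 ≤ (4*b^2)^3 := by
      apply pow_le_pow_left₀ hy0.le h
    rw [hy3] at h3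
    have h1 : (0:ℝ) < (1-6*b)*(1+2*b) := by nlinarith
    nlinarith [mul_pos (pow_pos hb0 4) h1]
  -- upper bound: y < ((1-2b)/2)²
  have hub : y < ((1 - 2*b)/2)^2 := by
    by_contra h
    push_neg at h
    have h3 : (((1 - 2*b)/2)^2)^3 ≤ y^3 := by
      apply pow_le_pow_left₀ (by positivity) h
    rw [hy3] at h3
    have h1 : (0:ℝ) < (1-6*b)*(1+2*b) := by nlinarith
    have h2 : (0:ℝ) < (1-2*b)^2 + 16*b^2 := by positivity
    have h4 : (0:ℝ) < (1-2*b)^2 := by nlinarith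
    nlinarith [mul_pos (mul_pos h4 h1) h2]
  have hApos : (0:ℝ) < (1 + 2*b) * (1 - 6*b) / (1 - 4*b) :=
    div_pos (by nlinarith) hc
  have hA : (0:ℝ) ≤ (1 + 2*b) * (1 - 6*b) / (1 - 4*b) := hApos.le
  have hvmaxpos : 0 < vmax := by
    have := Real.sqrt_pos.mpr hApos
    simp only [vmax]
    linarith
  have hvmaxsq : vmax^2 = (1/4) * ((1 + 2*b) * (1 - 6*b) / (1 - 4*b)) := by
    simp only [vmax]
    rw [mul_pow, Real.sq_sqrt hA]
    ring
  refine ⟨?_, ?_, ?_, ?_⟩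
  · apply Real.sqrt_pos.mpr
    exact div_pos (by linarith) hc
  · rw [show vi = Real.sqrt ((y - 4*b^2) / (1 - 4*b)) from rfl]
    rw [Real.sqrt_lt' hvmaxpos, hvmaxsq]
    rw [div_lt_iff₀ hc]
    have : (1/4) * ((1 + 2*b) * (1 - 6*b) / (1 - 4*b)) * (1 - 4*b)
        = (1/4) * ((1 + 2*b) * (1 - 6*b)) := by
      field_simp
    rw [this]
    nlinarith [hub]
  · rw [show v0 = Real.sqrt ((1 - 2*b) * (1 - 6*b) / (1 - 4*b)) from rfl]
    rw [Real.lt_sqrt hvmaxpos.le, hvmaxsq]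
    rw [← mul_div_assoc, div_lt_div_iff₀ hc hc]
    have h5 : (0:ℝ) < (1-6*b)*(1-4*b) := mul_pos (by linarith) hc
    nlinarith [mul_pos (show (0:ℝ) < 3-10*b by linarith) h5]
  · rw [show v0 = Real.sqrt ((1 - 2*b) * (1 - 6*b) / (1 - 4*b)) from rfl]
    rw [Real.sqrt_lt' one_pos]
    rw [div_lt_iff₀ hc]
    nlinarith
end

section
/- For b ∈ (0, 1/6), G'(v_max) = 0 and G attains its maximum over [0, 1] at v_max; by evenness, the global maximum of G over [−1, 1] equals (1−2b)²/(8−32b), attained at ±v_max. -/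
theorem stmt_16 (b : ℝ) (hb0 : 0 < b) (hb : b < 1/6) :
    let G : ℝ → ℝ := fun v => -v^2/2 +
      (4*b^2 + (1 - 2*b)^2 * v^2) /
        (2 * (4*b^2 + (1 - 2*b) * Real.sqrt (4*b^2 + (1 - 4*b) * v^2)))
    let vmax : ℝ := (1/2) * Real.sqrt ((1 + 2*b) * (1 - 6*b) / (1 - 4*b))
    deriv G vmax = 0 ∧
    (∀ v ∈ Set.Icc (0:ℝ) 1, G v ≤ G vmax) ∧
    (∀ v ∈ Set.Icc (-1:ℝ) 1, G v ≤ (1 - 2*b)^2 / (8 - 32*b)) ∧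
    G vmax = (1 - 2*b)^2 / (8 - 32*b) ∧
    G (-vmax) = (1 - 2*b)^2 / (8 - 32*b) := by
  intro G vmax
  have hb4 : 0 < 1 - 4*b := by linarith
  have hb2 : 0 < 1 - 2*b := by linarith
  set s : ℝ → ℝ := fun v => Real.sqrt (4*b^2 + (1 - 4*b) * v^2) with hsdef
  have hsnn : ∀ v : ℝ, 0 ≤ 4*b^2 + (1 - 4*b) * v^2 := fun v => by positivity
  have hs_sq : ∀ v : ℝ, (s v)^2 = 4*b^2 + (1 - 4*b) * v^2 := fun v => Real.sq_sqrt (hsnn v)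
  have hs_ge : ∀ v : ℝ, 2*b ≤ s v := by
    intro v
    rw [show (2*b : ℝ) = Real.sqrt ((2*b)^2) from (Real.sqrt_sq (by linarith)).symm]
    exact Real.sqrt_le_sqrt (by nlinarith [sq_nonneg v])
  have hs_pos : ∀ v : ℝ, 0 < s v := fun v => lt_of_lt_of_le (by linarith) (hs_ge v)
  have hD : ∀ v : ℝ, 0 < 4*b^2 + (1 - 2*b) * s v := fun v => by nlinarith [hs_pos v]
  -- the key simplification
  have hG : ∀ v : ℝ, G v = ((1 - 2*b) * s v - (s v)^2) / (2*(1 - 4*b)) := by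
    intro v
    have h2 := hs_sq v
    have hd := (hD v).ne'
    show -v^2/2 + (4*b^2 + (1 - 2*b)^2 * v^2) / (2 * (4*b^2 + (1 - 2*b) * s v))
        = ((1 - 2*b) * s v - (s v)^2) / (2*(1 - 4*b))
    rw [div_add_div _ _ (by norm_num) (by positivity), div_eq_div_iff (by positivity) (by positivity)]
    linear_combination (4*((1 - 2*b) * s v - (1 - 4*b))) * h2
  -- value of s at vmax
  have hvarg : 0 ≤ (1 + 2*b) * (1 - 6*b) / (1 - 4*b) := by
    apply div_nonneg _ (le_of_lt hb4)
    nlinarith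
  have hvm_sq : vmax^2 = (1 + 2*b) * (1 - 6*b) / (1 - 4*b) / 4 := by
    show ((1/2) * Real.sqrt ((1 + 2*b) * (1 - 6*b) / (1 - 4*b)))^2 = _
    rw [mul_pow, Real.sq_sqrt hvarg]; ring
  have hs_vmax : s vmax = (1 - 2*b)/2 := by
    show Real.sqrt (4*b^2 + (1 - 4*b) * vmax^2) = (1 - 2*b)/2
    rw [hvm_sq, show 4*b^2 + (1 - 4*b) * ((1 + 2*b) * (1 - 6*b) / (1 - 4*b) / 4)
        = ((1 - 2*b)/2)^2 by field_simp; ring]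
    exact Real.sqrt_sq (by linarith)
  have hGvmax : G vmax = (1 - 2*b)^2 / (8 - 32*b) := by
    rw [hG, hs_vmax]
    rw [div_eq_div_iff (by positivity) (by linarith)]
    ring
  have hbound : ∀ v : ℝ, G v ≤ (1 - 2*b)^2 / (8 - 32*b) := by
    intro v
    rw [hG]
    rw [div_le_div_iff₀ (by positivity) (by linarith)]
    nlinarith [sq_nonneg ((1 - 2*b) - 2 * s v)]
  refine ⟨?_, fun v _ => hGvmax ▸ hbound v, fun v _ => hbound v, hGvmax, ?_⟩
  · -- derivative
    have hGfun : G = fun v => ((1 - 2*b) * s v - (s v)^2) / (2*(1 - 4*b)) := funext hG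
    rw [hGfun]
    have hu : HasDerivAt (fun v : ℝ => 4*b^2 + (1 - 4*b) * v^2) (2*(1 - 4*b)*vmax) vmax := by
      have h := ((hasDerivAt_pow 2 vmax).const_mul (1 - 4*b)).const_add (4*b^2)
      refine h.congr_deriv ?_
      rw [show (2 - 1 : ℕ) = 1 from rfl, pow_one]
      ring
    have hune : 4*b^2 + (1 - 4*b) * vmax^2 ≠ 0 := by positivity
    have hsq : HasDerivAt s ((2*(1 - 4*b)*vmax) / (2 * s vmax)) vmax := hu.sqrt hune
    have h2 : HasDerivAt (fun v => (1 - 2*b) * s v - (s v)^2)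
        ((1 - 2*b) * ((2*(1 - 4*b)*vmax) / (2 * s vmax))
          - 2 * s vmax ^ 1 * ((2*(1 - 4*b)*vmax) / (2 * s vmax))) vmax :=
      (hsq.const_mul _).sub (hsq.pow 2)
    have h3 := h2.div_const (2*(1 - 4*b))
    have h4 : ((1 - 2*b) * ((2*(1 - 4*b)*vmax) / (2 * s vmax))
          - 2 * s vmax ^ 1 * ((2*(1 - 4*b)*vmax) / (2 * s vmax))) / (2*(1 - 4*b)) = 0 := by
      rw [hs_vmax]; field_simp; ring
    rw [h4] at h3
    exact h3.deriv
  · rw [hG, show s (-vmax) = s vmax by show Real.sqrt _ = Real.sqrt _; rw [neg_sq],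
      hs_vmax, div_eq_div_iff (by positivity) (by linarith)]
    ring
end

section
/- The general flux H(v) = v(d−v)/2 + (1−dv)(4b² + (1−2b)²v²)/(2(4b² + (1−2b)√(4b² + (1−4b)v²))) satisfies H(−v) = H(v) for all v ∈ [−1,1] if and only if d = 0, for any fixed b ∈ (0, 1/2). -/
theorem stmt_17 (b d : ℝ) (hb0 : 0 < b) (hb : b < 1/2) (hd : d ∈ Set.Ioo (-1 : ℝ) 1) :
    let H : ℝ → ℝ := fun v => v * (d - v) / 2 +
      (1 - d*v) * (4*b^2 + (1 - 2*b)^2 * v^2) /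
        (2 * (4*b^2 + (1 - 2*b) * Real.sqrt (4*b^2 + (1 - 4*b) * v^2)))
    (∀ v ∈ Set.Icc (-1 : ℝ) 1, H (-v) = H v) ↔ d = 0 := by
  intro H
  constructor
  · intro h
    have h1 := h (1/2) (by norm_num)
    simp only [H] at h1
    have harg : (4*b^2 + (1-4*b) * (-(1/2):ℝ)^2) = 4*b^2 + (1-4*b)*((1/2):ℝ)^2 := by ring
    rw [show (4*b^2 + (1 - 4*b) * (-(1/2):ℝ)^2) = 4*b^2 + (1 - 4*b)*((1/2):ℝ)^2 by ring] at h1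
    set s := Real.sqrt (4*b^2 + (1 - 4*b)*((1/2):ℝ)^2) with hs
    have hs0 : 0 ≤ s := Real.sqrt_nonneg _
    have hs2 : s^2 = 4*b^2 + (1-4*b)*(1/2)^2 := Real.sq_sqrt (by nlinarith)
    have hD : 0 < 4*b^2 + (1-2*b)*s := by nlinarith
    have hslt : (1-2*b)*(1/2)^2 < s := by
      nlinarith [sq_nonneg (10*b - 1)]
    have hDne : (2 * (4*b^2 + (1-2*b)*s)) ≠ 0 := by positivity
    field_simp at h1
    have h2 : d * ((1-2*b) * ((1-2*b) - 4*s)) = 0 := by linear_combination h1 / 2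
    rcases mul_eq_zero.mp h2 with h3 | h3
    · exact h3
    · exfalso; nlinarith
  · intro hd0 v hv
    simp only [H, hd0]
    rw [show (4*b^2 + (1 - 4*b) * (-v)^2) = 4*b^2 + (1 - 4*b)*v^2 by ring]
    ring
end

section
/- For b ∈ (0, 1/2), the equilibrium expected jump rate with d = 0 computed from the product marginal equals G(v): namely, (1/2)·Γ(0)·Γ(−1) + (1/2)·Γ(1)·Γ(0) + c·Γ(0)² + Γ(1)·Γ(−1) = G(v), where Γ = Γ^{θ(v)} is the one-site marginal at chemical potential θ(v), c = (b/(1−2b))², and G is as in the symmetric flux formula. -/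
set_option maxHeartbeats 1000000

lemma aux19 (b v s : ℝ) (hb2 : 0 < 1 - 2*b) (h7 : 0 < 1 - 2*b + s)
    (hs : s^2 = 4*b^2 + (1 - 4*b) * v^2) :
    (1/2) * ((1-2*b)*(1-v^2)/(1-2*b+s)) * ((s-(1-2*b)*v)*(1-v)/(2*(1-2*b+s)))
    + (1/2) * (((1-2*b)*v+s)*(1+v)/(2*(1-2*b+s))) * ((1-2*b)*(1-v^2)/(1-2*b+s))
    + (b/(1-2*b))^2 * ((1-2*b)*(1-v^2)/(1-2*b+s))^2
    + (((1-2*b)*v+s)*(1+v)/(2*(1-2*b+s))) * ((s-(1-2*b)*v)*(1-v)/(2*(1-2*b+s)))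
    = (1-v^2)*s/(2*(1-2*b+s)) := by
  have hD : (1-2*b+s) ≠ 0 := ne_of_gt h7
  have hb2' : (1-2*b) ≠ 0 := ne_of_gt hb2
  have h4D : ((4:ℝ)*(1-2*b+s)^2) ≠ 0 := ne_of_gt (by nlinarith)
  have h2D : ((2:ℝ)*(1-2*b+s)) ≠ 0 := ne_of_gt (by nlinarith)
  have e1 : (1/2) * ((1-2*b)*(1-v^2)/(1-2*b+s)) * ((s-(1-2*b)*v)*(1-v)/(2*(1-2*b+s)))
      = ((1-2*b)*(1-v^2)*((s-(1-2*b)*v)*(1-v)))/(4*(1-2*b+s)^2) := by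
    field_simp
    first | ring1 | exact Or.inl (by ring)
  have e2 : (1/2) * (((1-2*b)*v+s)*(1+v)/(2*(1-2*b+s))) * ((1-2*b)*(1-v^2)/(1-2*b+s))
      = ((1-2*b)*(1-v^2)*(((1-2*b)*v+s)*(1+v)))/(4*(1-2*b+s)^2) := by
    field_simp
    first | ring1 | exact Or.inl (by ring)
  have e3 : (b/(1-2*b))^2 * ((1-2*b)*(1-v^2)/(1-2*b+s))^2
      = (4*b^2*(1-v^2)^2)/(4*(1-2*b+s)^2) := by
    field_simp
    rw [div_eq_div_iff (mul_ne_zero (by contrapose! hb2'; linarith) (pow_ne_zero _ (by contrapose! hD; linarith))) (pow_ne_zero _ (by contrapose! hD; linarith))]; ring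
  have e4 : (((1-2*b)*v+s)*(1+v)/(2*(1-2*b+s))) * ((s-(1-2*b)*v)*(1-v)/(2*(1-2*b+s)))
      = ((((1-2*b)*v+s)*(1+v))*((s-(1-2*b)*v)*(1-v)))/(4*(1-2*b+s)^2) := by
    field_simp
    first | ring1 | exact Or.inl (by ring)
  rw [e1, e2, e3, e4, ← add_div, ← add_div, ← add_div,
    div_eq_div_iff h4D h2D]
  linear_combination (-2 - 2*s + 2*v^2 + 2*v^2*s + 4*b - 4*b*v^2) * hs

theorem stmt_19 (b : ℝ) (hb0 : 0 < b) (hb : b < 1/2) (v : ℝ) (hv : v ∈ Set.Ioo (-1 : ℝ) 1) :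
    let θ : ℝ := Real.log (((1 - 2*b) * v + Real.sqrt (4*b^2 + (1 - 4*b) * v^2)) / (2*b*(1 - v)))
    let Z : ℝ := 1 + 2*b*(Real.cosh θ - 1)
    let Γm : ℝ := b * Real.exp (-θ) / Z
    let Γ0 : ℝ := (1 - 2*b) / Z
    let Γp : ℝ := b * Real.exp θ / Z
    let c : ℝ := (b / (1 - 2*b))^2
    (1/2) * Γ0 * Γm + (1/2) * Γp * Γ0 + c * Γ0^2 + Γp * Γm =
      -v^2/2 + (4*b^2 + (1 - 2*b)^2 * v^2) /
        (2 * (4*b^2 + (1 - 2*b) * Real.sqrt (4*b^2 + (1 - 4*b) * v^2))) := by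
  obtain ⟨hv1, hv2⟩ := hv
  intro θ Z Γm Γ0 Γp c
  set s := Real.sqrt (4*b^2 + (1 - 4*b) * v^2) with hsdef
  have hb2 : 0 < 1 - 2*b := by linarith
  have hvm : 0 < 1 - v := by linarith
  have hvp : 0 < 1 + v := by linarith
  have hbb : (0:ℝ) < b^2 := by positivity
  have h4 : (0:ℝ) < 4*b^2*(1 - v^2) := by nlinarith [mul_pos hvm hvp, hbb]
  have hs : s^2 = 4*b^2 + (1 - 4*b) * v^2 := Real.sq_sqrt (by nlinarith [h4, sq_nonneg ((1-2*b)*v)])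
  have hspos : 0 < s := Real.sqrt_pos.mpr (by nlinarith [h4, sq_nonneg ((1-2*b)*v)])
  have h5 : ((1-2*b)*v)^2 < s^2 := by nlinarith [h4]
  have hnum : 0 < (1 - 2*b)*v + s := by nlinarith [h5, hspos]
  have hnum2 : 0 < s - (1 - 2*b)*v := by nlinarith [h5, hspos]
  have hden : (0:ℝ) < 2*b*(1 - v) := by positivity
  have hE : Real.exp θ = ((1 - 2*b)*v + s)/(2*b*(1-v)) := Real.exp_log (div_pos hnum hden)
  have hEm : Real.exp (-θ) = (s - (1 - 2*b)*v)/(2*b*(1+v)) := by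
    rw [Real.exp_neg, hE, inv_div, div_eq_div_iff hnum.ne' (by positivity)]
    linear_combination -hs
  have hZ : Z = (1 - 2*b + s)/(1 - v^2) := by
    show 1 + 2*b*(Real.cosh θ - 1) = _
    rw [Real.cosh_eq, hE, hEm]
    rw [eq_div_iff (by nlinarith)]
    field_simp
    ring
  show (1/2) * Γ0 * Γm + (1/2) * Γp * Γ0 + c * Γ0^2 + Γp * Γm =
      -v^2/2 + (4*b^2 + (1 - 2*b)^2 * v^2) / (2 * (4*b^2 + (1 - 2*b) * s))
  show (1/2) * ((1 - 2*b)/Z) * (b * Real.exp (-θ) / Z) + (1/2) * (b * Real.exp θ / Z) * ((1 - 2*b)/Z) + (b / (1 - 2*b))^2 * ((1 - 2*b)/Z)^2 + (b * Real.exp θ / Z) * (b * Real.exp (-θ) / Z) = _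
  have h6 : (0:ℝ) < 1 - v^2 := by nlinarith
  have h7 : (0:ℝ) < 1 - 2*b + s := by linarith
  have h8 : (0:ℝ) < 4*b^2 + (1 - 2*b)*s := by nlinarith
  have h9 : (0:ℝ) < 2*b*(1+v) := by positivity
  have e0 : (1 - 2*b)/Z = (1-2*b)*(1-v^2)/(1-2*b+s) := by
    rw [hZ, div_div_eq_mul_div]
  have ep : b * Real.exp θ / Z = ((1-2*b)*v+s)*(1+v)/(2*(1-2*b+s)) := by
    rw [hE, hZ]
    rw [div_eq_div_iff (by positivity) (by positivity)]
    field_simp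
    ring
  have em : b * Real.exp (-θ) / Z = (s-(1-2*b)*v)*(1-v)/(2*(1-2*b+s)) := by
    rw [hEm, hZ]
    rw [div_eq_div_iff (by positivity) (by positivity)]
    field_simp
    ring
  have hmid : ((1:ℝ)-v^2)*s/(2*(1-2*b+s)) = -v^2/2 + (4*b^2 + (1-2*b)^2*v^2)/(2*(4*b^2+(1-2*b)*s)) := by
    rw [div_add_div _ _ two_ne_zero (by positivity), div_eq_div_iff (by positivity) (by positivity)]
    linear_combination (4 - 8*b) * hs
  rw [e0, ep, em, ← hmid]
  exact aux19 b v s hb2 h7 hs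
end
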